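/- For every Π⁰₁ preorder P on ℕ there exists a uniformly computable sequence of sets (A_i) such that for all x, y: P x y if and only if A_x ⊆ A_y. -/

import Mathlib

namespace Pi01Aux

/-- bounded check: `g m = true` for all `m < n` -/
def chkAll (g : ℕ → Bool) : ℕ → Bool := fun n => Nat.rec true (fun m ih => ih && g m) n

theorem chkAll_iff (g : ℕ → Bool) (n : ℕ) : chkAll g n = true ↔ ∀ m < n, g m = true := by
  induction n with
  | zero => simp [chkAll]
  | succ k ih =>
    simp only [chkAll, Bool.and_eq_true] at *
    constructor
    · rintro ⟨h1, h2⟩ m hm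
      rcases Nat.lt_succ_iff_lt_or_eq.1 hm with h | rfl
      · exact ih.1 h1 m h
      · exact h2
    · intro h
      exact ⟨ih.2 fun m hm => h m (hm.trans (Nat.lt_succ_self k)), h k (Nat.lt_succ_self k)⟩

/-- bounded search: first `s < k` (in search order) with `p s = true` -/
def bfind (p : ℕ → Bool) : ℕ → Option ℕ := fun k =>
  Nat.rec none (fun m ih => Option.elim ih (bif p m then some m else none) some) k

@[simp] theorem bfind_zero (p : ℕ → Bool) : bfind p 0 = none := rfl

theorem bfind_succ (p : ℕ → Bool) (k : ℕ) :
    bfind p (k+1) = Option.elim (bfind p k) (bif p k then some k else none) some := rfl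

theorem bfind_some {p : ℕ → Bool} {k s : ℕ} (h : bfind p k = some s) : p s = true := by
  induction k with
  | zero => simp at h
  | succ m ih =>
    rw [bfind_succ] at h
    cases hm : bfind p m with
    | some t => rw [hm] at h; simp at h; subst h; exact ih hm
    | none =>
      rw [hm] at h
      cases hp : p m with
      | true => simp [hp] at h; subst h; exact hp
      | false => simp [hp] at h

theorem bfind_mono {p : ℕ → Bool} {k k' s : ℕ} (hk : k ≤ k') (h : bfind p k = some s) :
    bfind p k' = some s := by
  induction k' with
  | zero => interval_cases k <;> simp_all
  | succ m ih =>
    rcases Nat.lt_succ_iff_lt_or_eq.1 (Nat.lt_succ_of_le hk) with h' | rfl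
    · have := ih (by omega)
      rw [bfind_succ, this]
      rfl
    · exact h

theorem bfind_isSome {p : ℕ → Bool} {k s : ℕ} (hs : p s = true) (hk : s < k) :
    (bfind p k).isSome := by
  induction k with
  | zero => omega
  | succ m ih =>
    rw [bfind_succ]
    cases hm : bfind p m with
    | some t => simp
    | none =>
      rcases Nat.lt_succ_iff_lt_or_eq.1 hk with h' | rfl
      · have := ih h'; rw [hm] at this; simp at this
      · simp [hs]

end Pi01Aux

namespace Pi01Aux

variable (β : ℕ → ℕ → ℕ → Bool)

/-- event putting the current element (index `L.length`) into the upper set `U` -/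
def eu (b : ℕ) (L : List Bool) (s : ℕ) : Bool :=
  β s L.length b && chkAll (fun m => L.getD m true || β s L.length m) L.length

/-- event putting the current element into the lower set `D` -/
def ed (a : ℕ) (L : List Bool) (s : ℕ) : Bool :=
  β s a L.length && chkAll (fun m => !(L.getD m false) || β s m L.length) L.length

def race (a b : ℕ) (L : List Bool) (s : ℕ) : Bool := eu β b L s || ed β a L s

def step (a b N : ℕ) (L : List Bool) : Option (List Bool) :=
  if L.length = a then some (L ++ [true])
  else if L.length = b then some (L ++ [false])
  else (bfind (race β a b L) (N+1)).map fun s => L ++ [eu β b L s]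

def run (a b N : ℕ) : ℕ → Option (List Bool) := fun x =>
  Nat.rec (some []) (fun _ ih => Option.bind ih (step β a b N)) x

@[simp] theorem run_zero (a b N : ℕ) : run β a b N 0 = some [] := rfl

theorem run_succ (a b N x : ℕ) :
    run β a b N (x+1) = Option.bind (run β a b N x) (step β a b N) := rfl

theorem step_eq {a b N : ℕ} {L₀ L : List Bool} (h : step β a b N L₀ = some L) :
    ∃ v, L = L₀ ++ [v] ∧
      ((L₀.length = a ∧ v = true) ∨
       (L₀.length ≠ a ∧ L₀.length = b ∧ v = false) ∨
       (L₀.length ≠ a ∧ L₀.length ≠ b ∧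
         ∃ s, race β a b L₀ s = true ∧ v = eu β b L₀ s)) := by
  unfold step at h
  split at h
  · exact ⟨true, by simpa using h.symm, Or.inl ⟨by assumption, rfl⟩⟩
  · split at h
    · exact ⟨false, by simpa using h.symm, Or.inr (Or.inl ⟨by assumption, by assumption, rfl⟩)⟩
    · rcases Option.map_eq_some_iff.1 h with ⟨s, hs, rfl⟩
      exact ⟨_, rfl, Or.inr (Or.inr ⟨by assumption, by assumption, s, bfind_some hs, rfl⟩)⟩

theorem run_length {a b N : ℕ} : ∀ {x : ℕ} {L : List Bool},
    run β a b N x = some L → L.length = x := by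
  intro x
  induction x with
  | zero => intro L h; simp at h; simp [← h]
  | succ k ih =>
    intro L h
    rw [run_succ] at h
    rcases Option.bind_eq_some_iff.1 h with ⟨L₀, hL₀, hstep⟩
    rcases step_eq β hstep with ⟨v, rfl, _⟩
    simp [ih hL₀]

theorem step_mono {a b N N' : ℕ} {L₀ L : List Bool} (hN : N ≤ N')
    (h : step β a b N L₀ = some L) : step β a b N' L₀ = some L := by
  unfold step at h ⊢
  by_cases h1 : L₀.length = a
  · simpa [h1] using h
  · by_cases h2 : L₀.length = b
    · simpa [h1, h2] using h
    · simp only [h1, h2, if_false] at h ⊢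
      rcases Option.map_eq_some_iff.1 h with ⟨s, hs, rfl⟩
      rw [bfind_mono (Nat.succ_le_succ hN) hs]
      rfl

theorem run_mono {a b N N' : ℕ} (hN : N ≤ N') : ∀ {x : ℕ} {L : List Bool},
    run β a b N x = some L → run β a b N' x = some L := by
  intro x
  induction x with
  | zero => simp
  | succ k ih =>
    intro L h
    rw [run_succ] at h ⊢
    rcases Option.bind_eq_some_iff.1 h with ⟨L₀, hL₀, hstep⟩
    rw [ih hL₀]
    simpa using step_mono β hN hstep

theorem run_take {a b N : ℕ} : ∀ {x : ℕ} {L : List Bool},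
    run β a b N x = some L → ∀ y ≤ x, run β a b N y = some (L.take y) := by
  intro x
  induction x with
  | zero => intro L h y hy; interval_cases y; simpa using h
  | succ k ih =>
    intro L h y hy
    rw [run_succ] at h
    rcases Option.bind_eq_some_iff.1 h with ⟨L₀, hL₀, hstep⟩
    rcases step_eq β hstep with ⟨v, rfl, _⟩
    have hlen : L₀.length = k := run_length β hL₀
    rcases Nat.lt_succ_iff_lt_or_eq.1 (Nat.lt_succ_of_le hy) with h' | rfl
    · have hy' : y ≤ k := by omega
      have := ih hL₀ y hy'
      rwa [List.take_append_of_le_length (by omega)]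
    · rw [List.take_of_length_le (by simp [hlen])]
      rw [run_succ, hL₀]
      simpa using hstep

end Pi01Aux

namespace Pi01Aux

variable (β : ℕ → ℕ → ℕ → Bool)

theorem run_agree {a b N N' x x' : ℕ} {L L' : List Bool}
    (h : run β a b N x = some L) (h' : run β a b N' x' = some L') (hx : x ≤ x') :
    L = L'.take x := by
  have h1 : run β a b (max N N') x = some L := run_mono β (le_max_left _ _) h
  have h2 : run β a b (max N N') x' = some L' := run_mono β (le_max_right _ _) h'
  have h3 := run_take β h2 x hx
  rw [h1] at h3
  exact Option.some_inj.1 h3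

theorem run_getD {a b N N' x x' m : ℕ} {L L' : List Bool} {d d' : Bool}
    (h : run β a b N x = some L) (h' : run β a b N' x' = some L')
    (hm : m < x) (hm' : m < x') : L.getD m d = L'.getD m d' := by
  have key : ∀ {N N' x x' : ℕ} {L L' : List Bool} {d d' : Bool},
      run β a b N x = some L → run β a b N' x' = some L' → m < x → x ≤ x' →
      L.getD m d = L'.getD m d' := by
    intro N N' x x' L L' d d' h h' hm hx
    have hL := run_agree β h h' hx
    subst hL
    have hlen' : L'.length = x' := run_length β h'
    have hmx : m < (L'.take x).length := by simp [hlen']; omega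
    rw [List.getD_eq_getElem _ _ hmx, List.getD_eq_getElem _ _ (by omega : m < L'.length)]
    exact List.getElem_take
  rcases le_total x x' with hx | hx
  · exact key h h' hm hx
  · exact (key h' h hm' hx).symm

theorem run_decide {a b N x : ℕ} {L : List Bool}
    (h : run β a b N (x+1) = some L) :
    ∃ L₀, run β a b N x = some L₀ ∧ L₀.length = x ∧
      ((x = a ∧ L = L₀ ++ [true]) ∨
       (x ≠ a ∧ x = b ∧ L = L₀ ++ [false]) ∨
       (x ≠ a ∧ x ≠ b ∧
         ∃ s, race β a b L₀ s = true ∧ L = L₀ ++ [eu β b L₀ s])) := by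
  rw [run_succ] at h
  rcases Option.bind_eq_some_iff.1 h with ⟨L₀, hL₀, hstep⟩
  have hlen : L₀.length = x := run_length β hL₀
  rcases step_eq β hstep with ⟨v, rfl, hc⟩
  refine ⟨L₀, hL₀, hlen, ?_⟩
  rw [hlen] at hc
  rcases hc with ⟨h1, h2⟩ | ⟨h1, h2, h3⟩ | ⟨h1, h2, s, h3, h4⟩
  · exact Or.inl ⟨h1, by rw [h2]⟩
  · exact Or.inr (Or.inl ⟨h1, h2, by rw [h3]⟩)
  · exact Or.inr (Or.inr ⟨h1, h2, s, h3, by rw [h4]⟩)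

theorem getD_append_last (L₀ : List Bool) (v d : Bool) :
    (L₀ ++ [v]).getD L₀.length d = v := by
  rw [List.getD_eq_getElem _ _ (by simp)]
  simp

end Pi01Aux

namespace Pi01Aux

variable (β : ℕ → ℕ → ℕ → Bool)

theorem eu_iff (b : ℕ) (L : List Bool) (s : ℕ) :
    eu β b L s = true ↔ β s L.length b = true ∧
      ∀ m < L.length, L.getD m false = true ∨ β s L.length m = true := by
  simp only [eu, Bool.and_eq_true, chkAll_iff, Bool.or_eq_true]
  constructor
  · rintro ⟨h1, h2⟩
    refine ⟨h1, fun m hm => ?_⟩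
    rcases h2 m hm with h | h
    · left
      rw [List.getD_eq_getElem _ _ hm] at h ⊢
      exact h
    · exact Or.inr h
  · rintro ⟨h1, h2⟩
    refine ⟨h1, fun m hm => ?_⟩
    rcases h2 m hm with h | h
    · left
      rw [List.getD_eq_getElem _ _ hm] at h ⊢
      exact h
    · exact Or.inr h

theorem ed_iff (a : ℕ) (L : List Bool) (s : ℕ) :
    ed β a L s = true ↔ β s a L.length = true ∧
      ∀ m < L.length, L.getD m false = false ∨ β s m L.length = true := by
  simp only [ed, Bool.and_eq_true, chkAll_iff, Bool.or_eq_true, Bool.not_eq_true',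
    Bool.not_eq_eq_eq_not]
  constructor
  · rintro ⟨h1, h2⟩
    exact ⟨h1, fun m hm => h2 m hm⟩
  · rintro ⟨h1, h2⟩
    exact ⟨h1, fun m hm => h2 m hm⟩

variable {P : ℕ → ℕ → Prop}

section Invariants

variable {a b : ℕ}
variable (hsound : ∀ s u v, β s u v = true → ¬ P u v)

/-- decision of a raced element, extracted -/
theorem raced_decision {N m : ℕ} {L : List Bool} (hma : m ≠ a) (hmb : m ≠ b)
    (h : run β a b N (m+1) = some L) :
    ∃ L₀ s, run β a b N m = some L₀ ∧ L₀.length = m ∧ race β a b L₀ s = true ∧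
      L = L₀ ++ [eu β b L₀ s] := by
  rcases run_decide β h with ⟨L₀, hL₀, hlen, hc⟩
  rcases hc with ⟨h1, _⟩ | ⟨_, h2, _⟩ | ⟨_, _, s, h3, h4⟩
  · exact absurd h1 hma
  · exact absurd h2 hmb
  · exact ⟨L₀, s, hL₀, hlen, h3, h4⟩

theorem decision_a {N x : ℕ} {L : List Bool} (h : run β a b N x = some L) (ha : a < x) :
    L.getD a false = true := by
  have h1 := run_take β h (a+1) ha
  rcases run_decide β h1 with ⟨L₀, hL₀, hlen, hc⟩
  have hval : L.getD a false = (L.take (a+1)).getD a false :=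
    run_getD β h h1 (by omega) (by omega)
  rcases hc with ⟨_, h2⟩ | ⟨h1', _⟩ | ⟨h1', _⟩
  · rw [hval, h2, ← hlen, getD_append_last]
  · exact absurd rfl h1'
  · exact absurd rfl h1'

theorem decision_b {N x : ℕ} {L : List Bool} (hne : a ≠ b) (h : run β a b N x = some L)
    (hb : b < x) : L.getD b false = false := by
  have h1 := run_take β h (b+1) hb
  rcases run_decide β h1 with ⟨L₀, hL₀, hlen, hc⟩
  have hval : L.getD b false = (L.take (b+1)).getD b false :=
    run_getD β h h1 (by omega) (by omega)
  rcases hc with ⟨h1', _⟩ | ⟨_, _, h2⟩ | ⟨_, h1', _⟩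
  · exact absurd h1'.symm hne
  · rw [hval, h2, ← hlen, getD_append_last]
  · exact absurd rfl h1'

include hsound

theorem inv1 (hab : ¬ P a b) {N x m : ℕ} {L : List Bool}
    (h : run β a b N x = some L) (hm : m < x) (hd : L.getD m false = true) : ¬ P m b := by
  by_cases hma : m = a
  · subst hma; exact hab
  by_cases hmb : m = b
  · subst hmb
    intro _
    have hdb := decision_b β (Ne.symm hma) h hm
    rw [hdb] at hd
    exact Bool.false_ne_true hd
  have h1 := run_take β h (m+1) hm
  rcases raced_decision β hma hmb h1 with ⟨L₀, s, hL₀, hlen, hrace, heq⟩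
  have hval : L.getD m false = (L.take (m+1)).getD m false :=
    run_getD β h h1 hm (by omega)
  have hval2 : (L₀ ++ [eu β b L₀ s]).getD m false = eu β b L₀ s := by
    rw [← hlen]; exact getD_append_last _ _ _
  rw [heq, hval2] at hval
  have heu : eu β b L₀ s = true := by rw [← hval, hd]
  have h1' := ((eu_iff β b L₀ s).1 heu).1
  rw [hlen] at h1'
  exact hsound _ _ _ h1'

theorem inv2 (hab : ¬ P a b) {N x m : ℕ} {L : List Bool}
    (h : run β a b N x = some L) (hm : m < x) (hd : L.getD m false = false) : ¬ P a m := by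
  by_cases hmb : m = b
  · subst hmb; exact hab
  by_cases hma : m = a
  · subst hma
    have hdb := decision_a β h hm
    rw [hdb] at hd
    exact fun _ => by simp at hd
  have h1 := run_take β h (m+1) hm
  rcases raced_decision β hma hmb h1 with ⟨L₀, s, hL₀, hlen, hrace, heq⟩
  have hval : L.getD m false = (L.take (m+1)).getD m false :=
    run_getD β h h1 hm (by omega)
  have hval2 : (L₀ ++ [eu β b L₀ s]).getD m false = eu β b L₀ s := by
    rw [← hlen]; exact getD_append_last _ _ _
  rw [heq, hval2] at hval
  have heu : eu β b L₀ s = false := by rw [← hval, hd]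
  have hed : ed β a L₀ s = true := by
    have := hrace
    unfold race at this
    rw [heu] at this
    simpa using this
  have h1' := ((ed_iff β a L₀ s).1 hed).1
  rw [hlen] at h1'
  exact hsound _ _ _ h1'

theorem inv3 (hab : ¬ P a b) {N x m m' : ℕ} {L : List Bool}
    (h : run β a b N x = some L) (hm : m < x) (hm' : m' < x)
    (hd : L.getD m false = true) (hd' : L.getD m' false = false) : ¬ P m m' := by
  by_cases hmm : m = m'
  · subst hmm; rw [hd] at hd'; exact fun _ => by simp at hd'
  by_cases hm'b : m' = b
  · subst hm'b; exact inv1 β hsound hab h hm hd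
  by_cases hm'a : m' = a
  · subst hm'a
    have := decision_a β h hm'
    rw [this] at hd'
    exact fun _ => by simp at hd'
  -- m' was raced
  have h1' := run_take β h (m'+1) hm'
  rcases raced_decision β hm'a hm'b h1' with ⟨L₀', s', hL₀', hlen', hrace', heq'⟩
  have hval' : L.getD m' false = (L.take (m'+1)).getD m' false :=
    run_getD β h h1' hm' (by omega)
  have hval2' : (L₀' ++ [eu β b L₀' s']).getD m' false = eu β b L₀' s' := by
    rw [← hlen']; exact getD_append_last _ _ _
  rw [heq', hval2'] at hval'
  have heu' : eu β b L₀' s' = false := by rw [← hval', hd']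
  have hed' : ed β a L₀' s' = true := by
    have := hrace'
    unfold race at this
    rw [heu'] at this
    simpa using this
  rcases Nat.lt_or_ge m m' with hlt | hge
  · -- use m'-s event constraint at k = m
    have hcons := ((ed_iff β a L₀' s').1 hed').2 m (by omega)
    rcases hcons with hfalse | hβ
    · have : L₀'.getD m false = L.getD m false := run_getD β hL₀' h (by omega) hm
      rw [this, hd] at hfalse
      exact fun _ => Bool.noConfusion hfalse
    · rw [hlen'] at hβ
      exact hsound _ _ _ hβ
  · -- m' < m ; look at m's decision
    have hlt' : m' < m := by omega
    by_cases hma : m = a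
    · subst hma; exact inv2 β hsound hab h hm' hd'
    by_cases hmb : m = b
    · subst hmb
      have := decision_b β (fun hch => hma hch.symm) h hm
      rw [this] at hd
      exact fun _ => Bool.false_ne_true hd
    have h1 := run_take β h (m+1) hm
    rcases raced_decision β hma hmb h1 with ⟨L₀, s, hL₀, hlen, hrace, heq⟩
    have hval : L.getD m false = (L.take (m+1)).getD m false :=
      run_getD β h h1 hm (by omega)
    have hval2 : (L₀ ++ [eu β b L₀ s]).getD m false = eu β b L₀ s := by
      rw [← hlen]; exact getD_append_last _ _ _
    rw [heq, hval2] at hval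
    have heu : eu β b L₀ s = true := by rw [← hval, hd]
    have hcons := ((eu_iff β b L₀ s).1 heu).2 m' (by omega)
    rcases hcons with htrue | hβ
    · have : L₀.getD m' false = L.getD m' false := run_getD β hL₀ h (by omega) hm'
      rw [this, hd'] at htrue
      exact fun _ => Bool.false_ne_true htrue
    · rw [hlen] at hβ
      exact hsound _ _ _ hβ

end Invariants

end Pi01Aux

namespace Pi01Aux

theorem stage_amalg {x : ℕ} {q : ℕ → Prop} {g : ℕ → ℕ → Bool}
    (hm : ∀ s t m, s ≤ t → g s m = true → g t m = true)
    (H : ∀ m < x, q m → ∃ s, g s m = true) :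
    ∃ S, ∀ m < x, q m → g S m = true := by
  induction x with
  | zero => exact ⟨0, fun m hm => by omega⟩
  | succ k ih =>
    obtain ⟨S₀, hS₀⟩ := ih fun m hmk => H m (by omega)
    by_cases hq : q k
    · obtain ⟨s₁, hs₁⟩ := H k (by omega) hq
      refine ⟨max S₀ s₁, fun m hmk hqm => ?_⟩
      rcases Nat.lt_succ_iff_lt_or_eq.1 hmk with h' | rfl
      · exact hm _ _ _ (le_max_left _ _) (hS₀ m h' hqm)
      · exact hm _ _ _ (le_max_right _ _) hs₁
    · refine ⟨S₀, fun m hmk hqm => ?_⟩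
      rcases Nat.lt_succ_iff_lt_or_eq.1 hmk with h' | rfl
      · exact hS₀ m h' hqm
      · exact absurd hqm hq

variable (β : ℕ → ℕ → ℕ → Bool) {P : ℕ → ℕ → Prop}

theorem run_total
    (hsound : ∀ s u v, β s u v = true → ¬ P u v)
    (hmono : ∀ s t u v, s ≤ t → β s u v = true → β t u v = true)
    (hcomp : ∀ u v, ¬ P u v → ∃ s, β s u v = true)
    (hrefl : ∀ u, P u u) (htrans : ∀ u v w, P u v → P v w → P u w)
    {a b : ℕ} (hab : ¬ P a b) :
    ∀ x, ∃ N L, run β a b N x = some L := by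
  intro x
  induction x with
  | zero => exact ⟨0, [], rfl⟩
  | succ k ih =>
    obtain ⟨N₀, L, hL⟩ := ih
    have hlen : L.length = k := run_length β hL
    by_cases hka : k = a
    · refine ⟨N₀, L ++ [true], ?_⟩
      rw [run_succ, hL]
      simp [step, hlen, hka]
    by_cases hkb : k = b
    · refine ⟨N₀, L ++ [false], ?_⟩
      rw [run_succ, hL]
      simp only [Option.bind_some, step, hlen, hka, hkb, if_true, if_false]
      rw [if_neg (fun hba => hka (hkb.trans hba))]
    -- the race for k succeeds
    have hor : (¬ P k b ∧ ∀ m < k, L.getD m false = false → ¬ P k m) ∨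
        (¬ P a k ∧ ∀ m < k, L.getD m false = true → ¬ P m k) := by
      by_contra hcon
      push_neg at hcon
      obtain ⟨h1, h2⟩ := hcon
      have c1 : P k b ∨ ∃ m, m < k ∧ L.getD m false = false ∧ P k m := by
        by_contra hc
        push_neg at hc
        exact absurd (h1 hc.1) (by push_neg; intro m hm hd; by_contra hp; exact hc.2 m hm hd hp)
      have c2 : P a k ∨ ∃ m, m < k ∧ L.getD m false = true ∧ P m k := by
        by_contra hc
        push_neg at hc
        exact absurd (h2 hc.1) (by push_neg; intro m hm hd; by_contra hp; exact hc.2 m hm hd hp)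
      rcases c1 with hpkb | ⟨m, hmk, hdm, hpkm⟩
      · rcases c2 with hpak | ⟨m', hm'k, hdm', hpm'k⟩
        · exact hab (htrans _ _ _ hpak hpkb)
        · exact inv1 β hsound hab hL hm'k hdm' (htrans _ _ _ hpm'k hpkb)
      · rcases c2 with hpak | ⟨m', hm'k, hdm', hpm'k⟩
        · exact inv2 β hsound hab hL hmk hdm (htrans _ _ _ hpak hpkm)
        · exact inv3 β hsound hab hL hm'k hmk hdm' hdm (htrans _ _ _ hpm'k hpkm)
    have hrace : ∃ s, race β a b L s = true := by
      rcases hor with ⟨h1, h2⟩ | ⟨h1, h2⟩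
      · obtain ⟨s₀, hs₀⟩ := hcomp _ _ h1
        obtain ⟨S₁, hS₁⟩ := stage_amalg (g := fun s m => β s k m)
          (fun s t m hst h => hmono _ _ _ _ hst h)
          (fun m hm hq => hcomp _ _ (h2 m hm hq))
        refine ⟨max s₀ S₁, ?_⟩
        have heu : eu β b L (max s₀ S₁) = true := by
          rw [eu_iff]
          refine ⟨by rw [hlen]; exact hmono _ _ _ _ (le_max_left _ _) hs₀, fun m hm => ?_⟩
          rw [hlen] at hm
          cases hd : L.getD m false with
          | true => exact Or.inl rfl
          | false =>
            right
            rw [hlen]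
            exact hmono _ _ _ _ (le_max_right _ _) (hS₁ m hm hd)
        unfold race
        rw [heu]
        rfl
      · obtain ⟨s₀, hs₀⟩ := hcomp _ _ h1
        obtain ⟨S₁, hS₁⟩ := stage_amalg (g := fun s m => β s m k)
          (fun s t m hst h => hmono _ _ _ _ hst h)
          (fun m hm hq => hcomp _ _ (h2 m hm hq))
        refine ⟨max s₀ S₁, ?_⟩
        have hed : ed β a L (max s₀ S₁) = true := by
          rw [ed_iff]
          refine ⟨by rw [hlen]; exact hmono _ _ _ _ (le_max_left _ _) hs₀, fun m hm => ?_⟩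
          rw [hlen] at hm
          cases hd : L.getD m false with
          | false => exact Or.inl rfl
          | true =>
            right
            rw [hlen]
            exact hmono _ _ _ _ (le_max_right _ _) (hS₁ m hm hd)
        unfold race
        rw [hed]
        simp
    obtain ⟨s, hs⟩ := hrace
    have hL' : run β a b (max N₀ s) k = some L := run_mono β (le_max_left _ _) hL
    have hbf : (bfind (race β a b L) (max N₀ s + 1)).isSome :=
      bfind_isSome hs (Nat.lt_succ_of_le (le_max_right _ _))
    obtain ⟨s', hs'⟩ := Option.isSome_iff_exists.1 hbf
    refine ⟨max N₀ s, L ++ [eu β b L s'], ?_⟩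
    rw [run_succ, hL']
    simp only [Option.bind_some, step, hlen, if_neg hka, if_neg hkb, hs', Option.map_some]

end Pi01Aux

namespace Pi01Aux

section PrimrecLemmas

variable {α : Type*} [Primcodable α]

theorem chkAll_primrec {g : α → ℕ → Bool} (hg : Primrec₂ g) :
    Primrec₂ fun a n => chkAll (g a) n := by
  have h : Primrec₂ fun (a : α) (p : ℕ × Bool) => p.2 && g a p.1 :=
    (Primrec.dom_bool₂ (· && ·)).comp (Primrec.snd.comp Primrec.snd)
      (hg.comp Primrec.fst (Primrec.fst.comp Primrec.snd))
  exact (Primrec.nat_rec (Primrec.const true) h).of_eq fun a n => rfl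

theorem bfind_primrec {p : α → ℕ → Bool} (hp : Primrec₂ p) :
    Primrec₂ fun a k => bfind (p a) k := by
  have h : Primrec₂ fun (a : α) (q : ℕ × Option ℕ) =>
      Option.elim q.2 (bif p a q.1 then some q.1 else none) some := by
    have ho : Primrec fun (t : α × (ℕ × Option ℕ)) => t.2.2 := Primrec.snd.comp Primrec.snd
    have hf : Primrec fun (t : α × (ℕ × Option ℕ)) =>
        bif p t.1 t.2.1 then some t.2.1 else none :=
      Primrec.cond (hp.comp Primrec.fst (Primrec.fst.comp Primrec.snd))
        (Primrec.option_some.comp (Primrec.fst.comp Primrec.snd)) (Primrec.const none)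
    have hg : Primrec₂ fun (t : α × (ℕ × Option ℕ)) (s : ℕ) => (some s : Option ℕ) :=
      (Primrec.option_some.comp Primrec.snd).to₂
    exact (Primrec.option_casesOn ho hf hg).of_eq fun t => by
      rcases t with ⟨a, k, o⟩; cases o <;> rfl
  exact (Primrec.nat_rec (Primrec.const none) h).of_eq fun a k => rfl

end PrimrecLemmas

section PrimrecConstruction

variable {β : ℕ → ℕ → ℕ → Bool}
variable (hβ : Primrec fun t : ℕ × ℕ × ℕ => β t.1 t.2.1 t.2.2)

include hβ

private theorem beta_pr {γ : Type*} [Primcodable γ] {f g h : γ → ℕ}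
    (hf : Primrec f) (hg : Primrec g) (hh : Primrec h) :
    Primrec fun c => β (f c) (g c) (h c) :=
  hβ.comp (hf.pair (hg.pair hh))

theorem eu_primrec : Primrec fun q : (ℕ × List Bool) × ℕ => eu β q.1.1 q.1.2 q.2 := by
  have hlen : Primrec fun q : (ℕ × List Bool) × ℕ => q.1.2.length :=
    Primrec.list_length.comp (Primrec.snd.comp Primrec.fst)
  have h1 : Primrec fun q : (ℕ × List Bool) × ℕ => β q.2 q.1.2.length q.1.1 :=
    beta_pr hβ Primrec.snd hlen (Primrec.fst.comp Primrec.fst)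
  have hg : Primrec₂ fun (q : (ℕ × List Bool) × ℕ) (m : ℕ) =>
      (q.1.2.getD m true || β q.2 q.1.2.length m) := by
    have ha : Primrec fun t : ((ℕ × List Bool) × ℕ) × ℕ => t.1.1.2.getD t.2 true :=
      (Primrec.list_getD true).comp (Primrec.snd.comp (Primrec.fst.comp Primrec.fst))
        Primrec.snd
    have hb : Primrec fun t : ((ℕ × List Bool) × ℕ) × ℕ => β t.1.2 t.1.1.2.length t.2 :=
      beta_pr hβ (Primrec.snd.comp Primrec.fst)
        (Primrec.list_length.comp (Primrec.snd.comp (Primrec.fst.comp Primrec.fst)))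
        Primrec.snd
    exact ((Primrec.dom_bool₂ (· || ·)).comp ha hb).to₂
  have h2 : Primrec fun q : (ℕ × List Bool) × ℕ =>
      chkAll (fun m => q.1.2.getD m true || β q.2 q.1.2.length m) q.1.2.length :=
    (chkAll_primrec hg).comp Primrec.id hlen
  exact (Primrec.dom_bool₂ (· && ·)).comp h1 h2

theorem ed_primrec : Primrec fun q : (ℕ × List Bool) × ℕ => ed β q.1.1 q.1.2 q.2 := by
  have hlen : Primrec fun q : (ℕ × List Bool) × ℕ => q.1.2.length :=
    Primrec.list_length.comp (Primrec.snd.comp Primrec.fst)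
  have h1 : Primrec fun q : (ℕ × List Bool) × ℕ => β q.2 q.1.1 q.1.2.length :=
    beta_pr hβ Primrec.snd (Primrec.fst.comp Primrec.fst) hlen
  have hg : Primrec₂ fun (q : (ℕ × List Bool) × ℕ) (m : ℕ) =>
      (!(q.1.2.getD m false) || β q.2 m q.1.2.length) := by
    have ha : Primrec fun t : ((ℕ × List Bool) × ℕ) × ℕ => !(t.1.1.2.getD t.2 false) :=
      (Primrec.dom_bool (!·)).comp <|
        (Primrec.list_getD false).comp (Primrec.snd.comp (Primrec.fst.comp Primrec.fst))
          Primrec.snd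
    have hb : Primrec fun t : ((ℕ × List Bool) × ℕ) × ℕ => β t.1.2 t.2 t.1.1.2.length :=
      beta_pr hβ (Primrec.snd.comp Primrec.fst) Primrec.snd
        (Primrec.list_length.comp (Primrec.snd.comp (Primrec.fst.comp Primrec.fst)))
    exact ((Primrec.dom_bool₂ (· || ·)).comp ha hb).to₂
  have h2 : Primrec fun q : (ℕ × List Bool) × ℕ =>
      chkAll (fun m => !(q.1.2.getD m false) || β q.2 m q.1.2.length) q.1.2.length :=
    (chkAll_primrec hg).comp Primrec.id hlen
  exact (Primrec.dom_bool₂ (· && ·)).comp h1 h2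

theorem race_primrec :
    Primrec fun q : ((ℕ × ℕ) × List Bool) × ℕ => race β q.1.1.1 q.1.1.2 q.1.2 q.2 := by
  have h1 : Primrec fun q : ((ℕ × ℕ) × List Bool) × ℕ => eu β q.1.1.2 q.1.2 q.2 :=
    (eu_primrec hβ).comp <|
      (((Primrec.snd.comp (Primrec.fst.comp Primrec.fst)).pair
        (Primrec.snd.comp Primrec.fst)).pair Primrec.snd)
  have h2 : Primrec fun q : ((ℕ × ℕ) × List Bool) × ℕ => ed β q.1.1.1 q.1.2 q.2 :=
    (ed_primrec hβ).comp <|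
      (((Primrec.fst.comp (Primrec.fst.comp Primrec.fst)).pair
        (Primrec.snd.comp Primrec.fst)).pair Primrec.snd)
  exact (Primrec.dom_bool₂ (· || ·)).comp h1 h2

set_option maxHeartbeats 1000000 in
theorem step_primrec :
    Primrec fun q : ((ℕ × ℕ) × ℕ) × List Bool =>
      step β q.1.1.1 q.1.1.2 q.1.2 q.2 := by
  have hL : Primrec fun q : ((ℕ × ℕ) × ℕ) × List Bool => q.2 := Primrec.snd
  have hlen : Primrec fun q : ((ℕ × ℕ) × ℕ) × List Bool => q.2.length :=
    Primrec.list_length.comp hL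
  have ha : Primrec fun q : ((ℕ × ℕ) × ℕ) × List Bool => q.1.1.1 :=
    Primrec.fst.comp (Primrec.fst.comp Primrec.fst)
  have hb : Primrec fun q : ((ℕ × ℕ) × ℕ) × List Bool => q.1.1.2 :=
    Primrec.snd.comp (Primrec.fst.comp Primrec.fst)
  have hN : Primrec fun q : ((ℕ × ℕ) × ℕ) × List Bool => q.1.2 :=
    Primrec.snd.comp Primrec.fst
  have happt : Primrec fun q : ((ℕ × ℕ) × ℕ) × List Bool => q.2 ++ [true] :=
    Primrec.list_concat.comp hL (Primrec.const true)
  have happf : Primrec fun q : ((ℕ × ℕ) × ℕ) × List Bool => q.2 ++ [false] :=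
    Primrec.list_concat.comp hL (Primrec.const false)
  have hbf : Primrec fun q : ((ℕ × ℕ) × ℕ) × List Bool =>
      bfind (race β q.1.1.1 q.1.1.2 q.2) (q.1.2 + 1) := by
    have hp : Primrec₂ fun (q : ((ℕ × ℕ) × ℕ) × List Bool) (s : ℕ) =>
        race β q.1.1.1 q.1.1.2 q.2 s :=
      ((race_primrec hβ).comp <|
        (((ha.comp Primrec.fst).pair (hb.comp Primrec.fst)).pair
          (hL.comp Primrec.fst)).pair Primrec.snd).to₂
    exact (bfind_primrec hp).comp Primrec.id (Primrec.succ.comp hN)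
  have hmap : Primrec fun q : ((ℕ × ℕ) × ℕ) × List Bool =>
      (bfind (race β q.1.1.1 q.1.1.2 q.2) (q.1.2 + 1)).map
        fun s => q.2 ++ [eu β q.1.1.2 q.2 s] := by
    refine Primrec.option_map hbf ?_
    have : Primrec fun t : (((ℕ × ℕ) × ℕ) × List Bool) × ℕ =>
        t.1.2 ++ [eu β t.1.1.1.2 t.1.2 t.2] := by
      refine Primrec.list_concat.comp (hL.comp Primrec.fst) ?_
      exact (eu_primrec hβ).comp <|
        (((hb.comp Primrec.fst).pair (hL.comp Primrec.fst)).pair Primrec.snd)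
    exact this.to₂
  exact Primrec.ite (Primrec.eq.comp hlen ha) (Primrec.option_some.comp happt)
    (Primrec.ite (Primrec.eq.comp hlen hb) (Primrec.option_some.comp happf) hmap)

set_option maxHeartbeats 1000000 in
theorem run_primrec :
    Primrec₂ fun (q : (ℕ × ℕ) × ℕ) (x : ℕ) => run β q.1.1 q.1.2 q.2 x := by
  have h : Primrec₂ fun (q : (ℕ × ℕ) × ℕ) (p : ℕ × Option (List Bool)) =>
      Option.bind p.2 (step β q.1.1 q.1.2 q.2) := by
    refine Primrec.option_bind (Primrec.snd.comp Primrec.snd) ?_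
    exact ((step_primrec hβ).comp <|
      ((Primrec.fst.comp Primrec.fst).pair Primrec.snd)).to₂
  exact (Primrec.nat_rec (Primrec.const (some [])) h).of_eq fun q x => rfl

/-- `dec β a b N x` : the decision for `x`, if the capped run succeeds -/
def decf (β : ℕ → ℕ → ℕ → Bool) (a b N x : ℕ) : Option Bool :=
  (run β a b N (x+1)).map fun L => L.getD x false

theorem decf_primrec :
    Primrec fun q : ((ℕ × ℕ) × ℕ) × ℕ => decf β q.1.1.1 q.1.1.2 q.1.2 q.2 := by
  have hrun : Primrec fun q : ((ℕ × ℕ) × ℕ) × ℕ =>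
      run β q.1.1.1 q.1.1.2 q.1.2 (q.2 + 1) :=
    (run_primrec hβ).comp Primrec.fst (Primrec.succ.comp Primrec.snd)
  refine Primrec.option_map hrun ?_
  exact ((Primrec.list_getD false).comp Primrec.snd
    (Primrec.snd.comp Primrec.fst)).to₂

end PrimrecConstruction

end Pi01Aux

namespace Pi01Aux

open scoped Classical in
/-- The final uniformly computable family: `Afun β x n` decides whether `n ∈ A_x`. -/
noncomputable def Afun (β : ℕ → ℕ → ℕ → Bool) (x n : ℕ) : Bool :=
  if β n.unpair.2 n.unpair.1.unpair.1 n.unpair.1.unpair.2 = true then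
    (if h : ∃ N, (decf β n.unpair.1.unpair.1 n.unpair.1.unpair.2 N x).isSome = true
     then (decf β n.unpair.1.unpair.1 n.unpair.1.unpair.2 (Nat.find h) x).getD true
     else true)
  else true

end Pi01Aux

set_option maxHeartbeats 2000000 in
open Pi01Aux in
theorem pi01_preorder_as_inclusion' (P : ℕ → ℕ → Prop)
    (hrefl : ∀ x, P x x) (htrans : ∀ x y z, P x y → P y z → P x z)
    (hPi : REPred fun p : ℕ × ℕ => ¬ P p.1 p.2) :
    ∃ A : ℕ → ℕ → Bool,
      Computable (fun p : ℕ × ℕ => A p.1 p.2) ∧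
      ∀ x y, P x y ↔ ∀ n, A x n = true → A y n = true := by
  classical
  have hN : Nat.Partrec (fun n =>
      Part.bind ((Encodable.decode (α := ℕ × ℕ) n : Option (ℕ × ℕ)) : Part (ℕ × ℕ)) fun p =>
        (Part.assert (¬ P p.1 p.2) fun _ => Part.some ()).map Encodable.encode) := hPi
  obtain ⟨cc, hcc⟩ := Nat.Partrec.Code.exists_code.1 hN
  set β : ℕ → ℕ → ℕ → Bool :=
    fun s u v => (Nat.Partrec.Code.evaln s cc (Nat.pair u v)).isSome with hβdef
  have keyiff : ∀ u v, (∃ s, β s u v = true) ↔ ¬ P u v := by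
    intro u v
    constructor
    · rintro ⟨s, hs⟩
      obtain ⟨y, hy⟩ := Option.isSome_iff_exists.1 hs
      have hy' : y ∈ cc.eval (Nat.pair u v) := Nat.Partrec.Code.evaln_sound hy
      rw [hcc] at hy'
      simp only [Encodable.decode] at hy'
      simp [Part.mem_map_iff, Part.mem_assert_iff, Encodable.decode, Nat.unpair_pair,
        Part.mem_bind_iff, Encodable.decodeSigma] at hy'
      exact hy'.1
    · intro hP
      have : Encodable.encode () ∈ (fun n =>
          Part.bind ((Encodable.decode (α := ℕ × ℕ) n : Option (ℕ × ℕ)) : Part (ℕ × ℕ)) fun p =>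
            (Part.assert (¬ P p.1 p.2) fun _ => Part.some ()).map Encodable.encode)
          (Nat.pair u v) := by
        simp [Part.mem_map_iff, Part.mem_assert_iff, Encodable.decode, Nat.unpair_pair,
          Part.mem_bind_iff, Encodable.decodeSigma]
        exact ⟨hP, ⟨(), rfl⟩⟩
      rw [← hcc] at this
      obtain ⟨k, hk⟩ := Nat.Partrec.Code.evaln_complete.1 this
      exact ⟨k, Option.isSome_iff_exists.2 ⟨_, hk⟩⟩
  have hsound : ∀ s u v, β s u v = true → ¬ P u v := fun s u v h => (keyiff u v).1 ⟨s, h⟩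
  have hcomp : ∀ u v, ¬ P u v → ∃ s, β s u v = true := fun u v h => (keyiff u v).2 h
  have hmono : ∀ s t u v, s ≤ t → β s u v = true → β t u v = true := by
    intro s t u v hst h
    obtain ⟨y, hy⟩ := Option.isSome_iff_exists.1 h
    exact Option.isSome_iff_exists.2 ⟨y, Nat.Partrec.Code.evaln_mono hst hy⟩
  have hβprim : Primrec fun t : ℕ × ℕ × ℕ => β t.1 t.2.1 t.2.2 := by
    have h1 : Primrec fun t : ℕ × ℕ × ℕ => ((t.1, cc), Nat.pair t.2.1 t.2.2) :=
      (Primrec.fst.pair (Primrec.const cc)).pair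
        (Primrec₂.natPair.comp (Primrec.fst.comp Primrec.snd) (Primrec.snd.comp Primrec.snd))
    exact Primrec.option_isSome.comp (Nat.Partrec.Code.primrec_evaln.comp h1)
  -- termination of the runs
  have hterm : ∀ a b, ¬ P a b → ∀ x, ∃ N, (decf β a b N x).isSome = true := by
    intro a b hab x
    obtain ⟨N, L, hL⟩ := run_total β hsound hmono hcomp hrefl htrans hab (x+1)
    exact ⟨N, by simp [decf, hL]⟩
  refine ⟨Afun β, ?_, ?_⟩
  · -- computability
    set cfun : ℕ × ℕ → ℕ → Bool := fun p N =>
      bif β p.2.unpair.2 p.2.unpair.1.unpair.1 p.2.unpair.1.unpair.2 then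
        (decf β p.2.unpair.1.unpair.1 p.2.unpair.1.unpair.2 N p.1).isSome else true
      with hcdef
    set mfun : ℕ × ℕ → ℕ → Bool := fun p N =>
      bif β p.2.unpair.2 p.2.unpair.1.unpair.1 p.2.unpair.1.unpair.2 then
        (decf β p.2.unpair.1.unpair.1 p.2.unpair.1.unpair.2 N p.1).getD true else true
      with hmdef
    have hu1 : Primrec fun q : (ℕ × ℕ) × ℕ => q.1.2.unpair.1.unpair.1 :=
      Primrec.fst.comp (Primrec.unpair.comp
        (Primrec.fst.comp (Primrec.unpair.comp (Primrec.snd.comp Primrec.fst))))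
    have hu2 : Primrec fun q : (ℕ × ℕ) × ℕ => q.1.2.unpair.1.unpair.2 :=
      Primrec.snd.comp (Primrec.unpair.comp
        (Primrec.fst.comp (Primrec.unpair.comp (Primrec.snd.comp Primrec.fst))))
    have hu3 : Primrec fun q : (ℕ × ℕ) × ℕ => q.1.2.unpair.2 :=
      Primrec.snd.comp (Primrec.unpair.comp (Primrec.snd.comp Primrec.fst))
    have hbq : Primrec fun q : (ℕ × ℕ) × ℕ =>
        β q.1.2.unpair.2 q.1.2.unpair.1.unpair.1 q.1.2.unpair.1.unpair.2 :=
      hβprim.comp (hu3.pair (hu1.pair hu2))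
    have hdq : Primrec fun q : (ℕ × ℕ) × ℕ =>
        decf β q.1.2.unpair.1.unpair.1 q.1.2.unpair.1.unpair.2 q.2 q.1.1 :=
      (decf_primrec hβprim).comp
        (((hu1.pair hu2).pair Primrec.snd).pair (Primrec.fst.comp Primrec.fst))
    have hcf : Computable₂ cfun := by
      refine Primrec₂.to_comp ?_
      exact (Primrec.cond hbq (Primrec.option_isSome.comp hdq) (Primrec.const true)).to₂
    have hmf : Computable₂ mfun := by
      refine Primrec₂.to_comp ?_
      exact (Primrec.cond hbq
        ((Primrec.option_getD).comp hdq (Primrec.const true)) (Primrec.const true)).to₂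
    have hF : Partrec fun p : ℕ × ℕ =>
        (Nat.rfind (fun N => Part.some (cfun p N))).map fun N => mfun p N :=
      Partrec.map (Partrec.rfind hcf.partrec₂) hmf
    refine Partrec.of_eq_tot hF ?_
    rintro ⟨x, n⟩
    by_cases hb : β n.unpair.2 n.unpair.1.unpair.1 n.unpair.1.unpair.2 = true
    · have h : ∃ N, (decf β n.unpair.1.unpair.1 n.unpair.1.unpair.2 N x).isSome = true :=
        hterm _ _ (hsound _ _ _ hb) x
      have hmem : Nat.find h ∈ Nat.rfind fun N => Part.some (cfun (x, n) N) := by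
        apply Nat.mem_rfind.2
        constructor
        · simp only [hcdef, hb, cond_true, Part.mem_some_iff]
          exact (Nat.find_spec h).symm
        · intro m hm
          simp only [hcdef, hb, cond_true, Part.mem_some_iff]
          have := Nat.find_min h hm
          rw [Bool.not_eq_true] at this
          exact this.symm
      have : mfun (x, n) (Nat.find h) ∈
          (Nat.rfind fun N => Part.some (cfun (x, n) N)).map fun N => mfun (x, n) N :=
        Part.mem_map _ hmem
      convert this using 1
      simp only [Afun, hb, if_true, hmdef, cond_true]
      rw [dif_pos h]
    · have hmem : 0 ∈ Nat.rfind fun N => Part.some (cfun (x, n) N) := by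
        apply Nat.mem_rfind.2
        constructor
        · simp [hcdef, hb]
        · intro m hm; omega
      have : mfun (x, n) 0 ∈
          (Nat.rfind fun N => Part.some (cfun (x, n) N)).map fun N => mfun (x, n) N :=
        Part.mem_map _ hmem
      convert this using 1
      simp [Afun, hb, hmdef]
  · -- correctness
    intro x y
    constructor
    · intro hPxy n hx
      set a := n.unpair.1.unpair.1 with hadef
      set b := n.unpair.1.unpair.2 with hbdef2
      set s := n.unpair.2 with hsdef
      by_cases hb : β s a b = true
      · have hab : ¬ P a b := hsound _ _ _ hb
        have hx' : ∃ N, (decf β a b N x).isSome = true := hterm _ _ hab x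
        have hy' : ∃ N, (decf β a b N y).isSome = true := hterm _ _ hab y
        obtain ⟨vx, hvx⟩ := Option.isSome_iff_exists.1 (Nat.find_spec hx')
        obtain ⟨vy, hvy⟩ := Option.isSome_iff_exists.1 (Nat.find_spec hy')
        obtain ⟨Lx, hLx, hvx'⟩ : ∃ L, run β a b (Nat.find hx') (x+1) = some L ∧
            L.getD x false = vx := by
          rcases Option.map_eq_some_iff.1 hvx with ⟨L, hL, hL'⟩
          exact ⟨L, hL, hL'⟩
        obtain ⟨Ly, hLy, hvy'⟩ : ∃ L, run β a b (Nat.find hy') (y+1) = some L ∧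
            L.getD y false = vy := by
          rcases Option.map_eq_some_iff.1 hvy with ⟨L, hL, hL'⟩
          exact ⟨L, hL, hL'⟩
        obtain ⟨N, L, hL⟩ := run_total β hsound hmono hcomp hrefl htrans hab (max x y + 1)
        have hxL : L.getD x false = vx := by
          rw [← hvx']
          exact run_getD β hL hLx (by omega) (by omega)
        have hyL : L.getD y false = vy := by
          rw [← hvy']
          exact run_getD β hL hLy (by omega) (by omega)
        have hxtrue : vx = true := by
          have : Afun β x n = (decf β a b (Nat.find hx') x).getD true := by
            simp only [Afun, ← hadef, ← hbdef2, ← hsdef, hb, if_true]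
            rw [dif_pos hx']
          rw [this, hvx] at hx
          simpa using hx
        have hytrue : vy = true := by
          by_contra hvyf
          have hvyf' : L.getD y false = false := by
            rw [hyL]; exact Bool.not_eq_true _ ▸ (by simpa using hvyf)
          have hxtrue' : L.getD x false = true := by rw [hxL, hxtrue]
          exact inv3 β hsound hab hL (by omega) (by omega) hxtrue' hvyf' hPxy
        show Afun β y n = true
        have : Afun β y n = (decf β a b (Nat.find hy') y).getD true := by
          simp only [Afun, ← hadef, ← hbdef2, ← hsdef, hb, if_true]
          rw [dif_pos hy']
        rw [this, hvy, hytrue]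
        rfl
      · show Afun β y n = true
        simp only [Afun, ← hadef, ← hbdef2, ← hsdef]
        rw [if_neg hb]
    · intro hIncl
      by_contra hP
      obtain ⟨s₀, hs₀⟩ := hcomp x y hP
      set n := Nat.pair (Nat.pair x y) s₀ with hndef
      have hua : n.unpair.1.unpair.1 = x := by simp [hndef]
      have hub : n.unpair.1.unpair.2 = y := by simp [hndef]
      have hus : n.unpair.2 = s₀ := by simp [hndef]
      have hxy : x ≠ y := fun hch => hP (hch ▸ hrefl x)
      have hx' : ∃ N, (decf β x y N x).isSome = true := hterm _ _ hP x
      have hy' : ∃ N, (decf β x y N y).isSome = true := hterm _ _ hP y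
      obtain ⟨vx, hvx⟩ := Option.isSome_iff_exists.1 (Nat.find_spec hx')
      obtain ⟨vy, hvy⟩ := Option.isSome_iff_exists.1 (Nat.find_spec hy')
      rcases Option.map_eq_some_iff.1 hvx with ⟨Lx, hLx, hvx'⟩
      rcases Option.map_eq_some_iff.1 hvy with ⟨Ly, hLy, hvy'⟩
      have hAx : Afun β x n = true := by
        simp only [Afun, hua, hub, hus, hs₀, if_true]
        rw [dif_pos hx', hvx]
        simp only [Option.getD_some]
        rw [← hvx']
        exact decision_a β hLx (by omega)
      have hAy : Afun β y n = false := by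
        simp only [Afun, hua, hub, hus, hs₀, if_true]
        rw [dif_pos hy', hvy]
        simp only [Option.getD_some]
        rw [← hvy']
        exact decision_b β hxy hLy (by omega)
      have := hIncl n hAx
      rw [hAy] at this
      exact Bool.false_ne_true this


/-- A relation on ℕ is Π⁰₁ if its complement (as a subset of ℕ × ℕ) is r.e. -/
def Pi01Rel (R : ℕ → ℕ → Prop) : Prop := REPred fun p : ℕ × ℕ => ¬ R p.1 p.2

/-- For every Π⁰₁ preorder `P` on ℕ there is a uniformly computable sequence of sets `A_i`
such that `P x y ↔ A_x ⊆ A_y`. -/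
theorem pi01_preorder_as_inclusion (P : ℕ → ℕ → Prop)
    (hrefl : ∀ x, P x x) (htrans : ∀ x y z, P x y → P y z → P x z)
    (hPi : Pi01Rel P) :
    ∃ A : ℕ → ℕ → Bool,
      Computable (fun p : ℕ × ℕ => A p.1 p.2) ∧
      ∀ x y, P x y ↔ ∀ n, A x n = true → A y n = true :=
  pi01_preorder_as_inclusion' P hrefl htrans hPi
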